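/- arXiv:1805.01139 — 2 statements merged into one kernel-verified Lean document; each statement's English description precedes it below -/
import Mathlib

section
/- Let lp be a coherent conditional lower prevision on C ⊆ C(X), and let A_lp := { (f − μ)·1_B : (f,B) ∈ C, μ ∈ ℝ, μ < lp(f|B) } and E(lp) := E(A_lp). Then: (i) E(lp) is a coherent set of desirable gambles on X; (ii) lp_{E(lp)}(f|B) = lp(f|B) for all (f,B) ∈ C; and (iii) for every coherent set of desirable gambles D on X such that lp_D coincides with lp on C, one has E(lp) ⊆ D. -/
open scoped BigOperators

namespace IPaper

variable {X : Type*}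

/-- A gamble on `X`: a bounded real-valued function. -/
def IsGamble (f : X → ℝ) : Prop := ∃ M : ℝ, ∀ x, |f x| ≤ M

/-- The indicator gamble of an event. -/
noncomputable def ind (B : Set X) : X → ℝ := Set.indicator B 1

/-- The set `G_{>0}(X)` of nonnegative nonzero gambles. -/
def Gpos (X : Type*) : Set (X → ℝ) := {f | IsGamble f ∧ 0 ≤ f ∧ f ≠ 0}

/-- A coherent set of desirable gambles. -/
structure CoherentSDG (D : Set (X → ℝ)) : Prop where
  subset_gambles : ∀ f ∈ D, IsGamble f
  d1 : ∀ f : X → ℝ, IsGamble f → 0 ≤ f → f ≠ 0 → f ∈ D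
  d2 : ∀ f ∈ D, ∀ l : ℝ, 0 < l → l • f ∈ D
  d3 : ∀ f ∈ D, ∀ g ∈ D, f + g ∈ D
  d4 : ∀ f : X → ℝ, f ≤ 0 → f ∉ D

/-- `posi A`: positive linear hull of `A`. -/
def posi (A : Set (X → ℝ)) : Set (X → ℝ) :=
  {g | ∃ (n : ℕ) (l : Fin (n + 1) → ℝ) (h : Fin (n + 1) → X → ℝ),
    (∀ i, 0 < l i) ∧ (∀ i, h i ∈ A) ∧ g = ∑ i, l i • h i}

/-- `E(A) := posi (A ∪ G_{>0}(X))`. -/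
def natExtSet (A : Set (X → ℝ)) : Set (X → ℝ) := posi (A ∪ Gpos X)

/-- `C(X)`: all pairs of a gamble and a nonempty event. -/
def domC (X : Type*) : Set ((X → ℝ) × Set X) := {p | IsGamble p.1 ∧ p.2.Nonempty}

/-- The conditional lower prevision `lp_D` derived from a set of gambles `D`. -/
noncomputable def lpOf (D : Set (X → ℝ)) (f : X → ℝ) (B : Set X) : EReal :=
  sSup (Real.toEReal '' {m : ℝ | (fun x => (f x - m) * ind B x) ∈ D})

/-- Coherence (Williams) of a conditional lower prevision on a domain `C`. -/
def Coherent (C : Set ((X → ℝ) × Set X)) (lp : (X → ℝ) → Set X → EReal) : Prop :=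
  ∃ D : Set (X → ℝ), CoherentSDG D ∧ ∀ p ∈ C, lp p.1 p.2 = lpOf D p.1 p.2

/-- The set `A_lp`. -/
def Alp (C : Set ((X → ℝ) × Set X)) (lp : (X → ℝ) → Set X → EReal) : Set (X → ℝ) :=
  {g | ∃ p ∈ C, ∃ m : ℝ, (m : EReal) < lp p.1 p.2 ∧ g = fun x => (p.1 x - m) * ind p.2 x}

/-- `E(lp) := E(A_lp)`. -/
def ElpSet (C : Set ((X → ℝ) × Set X)) (lp : (X → ℝ) → Set X → EReal) : Set (X → ℝ) :=
  natExtSet (Alp C lp)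

/-- The natural extension of `lp` to all of `C(X)`. -/
noncomputable def natExtLP (C : Set ((X → ℝ) × Set X)) (lp : (X → ℝ) → Set X → EReal)
    (f : X → ℝ) (B : Set X) : EReal :=
  lpOf (ElpSet C lp) f B

/-- Simple `B`-measurable gamble. -/
def SimpleMeas (Bfam : Set (Set X)) (g : X → ℝ) : Prop :=
  ∃ (c0 : ℝ) (n : ℕ) (c : Fin n → ℝ) (Bs : Fin n → Set X),
    0 ≤ c0 ∧ (∀ i, 0 ≤ c i) ∧ (∀ i, Bs i ∈ Bfam) ∧
    g = fun x => c0 + ∑ i, c i * ind (Bs i) x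

/-- `B`-measurable gamble: uniform limit of nonnegative simple `B`-measurable gambles. -/
def BMeas (Bfam : Set (Set X)) (g : X → ℝ) : Prop :=
  ∃ gs : ℕ → X → ℝ, (∀ n, 0 ≤ gs n ∧ SimpleMeas Bfam (gs n)) ∧
    TendstoUniformly gs g Filter.atTop

/-- A conditional linear prevision on `C(X)`: a coherent self-conjugate conditional
lower prevision on the full domain. -/
def CondLinPrev (P : (X → ℝ) → Set X → EReal) : Prop :=
  Coherent (domC X) P ∧ ∀ p ∈ domC X, P p.1 p.2 = -P (-p.1) p.2

section Product

variable {X1 X2 : Type*}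

/-- `A_{1→2}`. -/
def A12 (D2 : Set (X2 → ℝ)) (F1 : Set (Set X1)) : Set (X1 × X2 → ℝ) :=
  {g | ∃ f2 ∈ D2, ∃ B1 ∈ F1 ∪ {Set.univ}, g = fun p => f2 p.2 * ind B1 p.1}

/-- `A_{2→1}`. -/
def A21 (D1 : Set (X1 → ℝ)) (F2 : Set (Set X2)) : Set (X1 × X2 → ℝ) :=
  {g | ∃ f1 ∈ D1, ∃ B2 ∈ F2 ∪ {Set.univ}, g = fun p => f1 p.1 * ind B2 p.2}

/-- `D1 ⊗ D2`, relative to the families of conditioning events `F1`, `F2`. -/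
def indNatExt (D1 : Set (X1 → ℝ)) (D2 : Set (X2 → ℝ))
    (F1 : Set (Set X1)) (F2 : Set (Set X2)) : Set (X1 × X2 → ℝ) :=
  natExtSet (A12 D2 F1 ∪ A21 D1 F2)

/-- `marg_1(D)`. -/
def marg1 (D : Set (X1 × X2 → ℝ)) : Set (X1 → ℝ) :=
  {f | IsGamble f ∧ (fun p : X1 × X2 => f p.1) ∈ D}

/-- `marg_2(D)`. -/
def marg2 (D : Set (X1 × X2 → ℝ)) : Set (X2 → ℝ) :=
  {f | IsGamble f ∧ (fun p : X1 × X2 => f p.2) ∈ D}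

/-- `marg_1(D|B2)`. -/
def marg1c (D : Set (X1 × X2 → ℝ)) (B2 : Set X2) : Set (X1 → ℝ) :=
  {f | IsGamble f ∧ (fun p : X1 × X2 => f p.1 * ind B2 p.2) ∈ D}

/-- `marg_2(D|B1)`. -/
def marg2c (D : Set (X1 × X2 → ℝ)) (B1 : Set X1) : Set (X2 → ℝ) :=
  {f | IsGamble f ∧ (fun p : X1 × X2 => f p.2 * ind B1 p.1) ∈ D}

/-- Epistemic independence of a set of desirable gambles on `X1 × X2`. -/
def EpIndSDG (F1 : Set (Set X1)) (F2 : Set (Set X2)) (D : Set (X1 × X2 → ℝ)) : Prop :=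
  (∀ B2 ∈ F2, marg1c D B2 = marg1 D) ∧ (∀ B1 ∈ F1, marg2c D B1 = marg2 D)

/-- Independent product (of sets of desirable gambles). -/
def IndProductSDG (F1 : Set (Set X1)) (F2 : Set (Set X2))
    (D1 : Set (X1 → ℝ)) (D2 : Set (X2 → ℝ)) (D : Set (X1 × X2 → ℝ)) : Prop :=
  CoherentSDG D ∧ EpIndSDG F1 F2 D ∧ marg1 D = D1 ∧ marg2 D = D2

/-- The independent natural extension `lp1 ⊗ lp2` on `C(X1 × X2)`. -/
noncomputable def lpProd (C1 : Set ((X1 → ℝ) × Set X1)) (lp1 : (X1 → ℝ) → Set X1 → EReal)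
    (C2 : Set ((X2 → ℝ) × Set X2)) (lp2 : (X2 → ℝ) → Set X2 → EReal)
    (F1 : Set (Set X1)) (F2 : Set (Set X2)) :
    (X1 × X2 → ℝ) → Set (X1 × X2) → EReal :=
  lpOf (indNatExt (ElpSet C1 lp1) (ElpSet C2 lp2) F1 F2)

/-- An independent domain `C ⊆ C(X1 × X2)`. -/
def IndepDomain (F1 : Set (Set X1)) (F2 : Set (Set X2))
    (C : Set ((X1 × X2 → ℝ) × Set (X1 × X2))) : Prop :=
  (∀ (f1 : X1 → ℝ) (B1 : Set X1), IsGamble f1 → B1.Nonempty → ∀ B2 ∈ F2,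
    (((fun p : X1 × X2 => f1 p.1), B1 ×ˢ (Set.univ : Set X2)) ∈ C ↔
      ((fun p : X1 × X2 => f1 p.1), B1 ×ˢ B2) ∈ C)) ∧
  (∀ (f2 : X2 → ℝ) (B2 : Set X2), IsGamble f2 → B2.Nonempty → ∀ B1 ∈ F1,
    (((fun p : X1 × X2 => f2 p.2), (Set.univ : Set X1) ×ˢ B2) ∈ C ↔
      ((fun p : X1 × X2 => f2 p.2), B1 ×ˢ B2) ∈ C))

/-- Epistemic independence of a conditional lower prevision on a domain `C`. -/
def EpIndLP (F1 : Set (Set X1)) (F2 : Set (Set X2))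
    (C : Set ((X1 × X2 → ℝ) × Set (X1 × X2)))
    (lp : (X1 × X2 → ℝ) → Set (X1 × X2) → EReal) : Prop :=
  (∀ (f1 : X1 → ℝ) (B1 : Set X1), IsGamble f1 → B1.Nonempty →
    ((fun p : X1 × X2 => f1 p.1), B1 ×ˢ (Set.univ : Set X2)) ∈ C → ∀ B2 ∈ F2,
    lp (fun p : X1 × X2 => f1 p.1) (B1 ×ˢ (Set.univ : Set X2)) =
      lp (fun p : X1 × X2 => f1 p.1) (B1 ×ˢ B2)) ∧
  (∀ (f2 : X2 → ℝ) (B2 : Set X2), IsGamble f2 → B2.Nonempty →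
    ((fun p : X1 × X2 => f2 p.2), (Set.univ : Set X1) ×ˢ B2) ∈ C → ∀ B1 ∈ F1,
    lp (fun p : X1 × X2 => f2 p.2) ((Set.univ : Set X1) ×ˢ B2) =
      lp (fun p : X1 × X2 => f2 p.2) (B1 ×ˢ B2))

/-- Independent product of two conditional lower previsions, on the joint domain `C`. -/
def IndProductLP (F1 : Set (Set X1)) (F2 : Set (Set X2))
    (C1 : Set ((X1 → ℝ) × Set X1)) (lp1 : (X1 → ℝ) → Set X1 → EReal)
    (C2 : Set ((X2 → ℝ) × Set X2)) (lp2 : (X2 → ℝ) → Set X2 → EReal)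
    (C : Set ((X1 × X2 → ℝ) × Set (X1 × X2)))
    (lp : (X1 × X2 → ℝ) → Set (X1 × X2) → EReal) : Prop :=
  Coherent C lp ∧ EpIndLP F1 F2 C lp ∧
  (∀ p ∈ C1, lp (fun q : X1 × X2 => p.1 q.1) (p.2 ×ˢ (Set.univ : Set X2)) = lp1 p.1 p.2) ∧
  (∀ p ∈ C2, lp (fun q : X1 × X2 => p.1 q.2) ((Set.univ : Set X1) ×ˢ p.2) = lp2 p.1 p.2)

end Product


section Aux

lemma aux_isGamble_smul {f : X → ℝ} (c : ℝ) (hf : IsGamble f) : IsGamble (c • f) := by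
  obtain ⟨M, hM⟩ := hf
  exact ⟨|c| * M, fun x => by
    simp only [Pi.smul_apply, smul_eq_mul, abs_mul]
    exact mul_le_mul_of_nonneg_left (hM x) (abs_nonneg c)⟩

lemma aux_isGamble_add {f g : X → ℝ} (hf : IsGamble f) (hg : IsGamble g) :
    IsGamble (f + g) := by
  obtain ⟨M, hM⟩ := hf; obtain ⟨N, hN⟩ := hg
  exact ⟨M + N, fun x => (abs_add_le _ _).trans (add_le_add (hM x) (hN x))⟩

lemma aux_ind_nonneg (B : Set X) (x : X) : 0 ≤ ind B x := by
  unfold ind; exact Set.indicator_nonneg (fun _ _ => by norm_num) x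

lemma aux_ind_le_one (B : Set X) (x : X) : ind B x ≤ 1 := by
  unfold ind Set.indicator; split <;> norm_num

lemma aux_ind_mem {B : Set X} {x : X} (hx : x ∈ B) : ind B x = 1 := by
  simp [ind, Set.indicator_of_mem hx]

lemma aux_isGamble_mul_ind {f : X → ℝ} (hf : IsGamble f) (m : ℝ) (B : Set X) :
    IsGamble (fun x => (f x - m) * ind B x) := by
  obtain ⟨M, hM⟩ := hf
  refine ⟨M + |m|, fun x => ?_⟩
  have h1 : |f x - m| ≤ M + |m| := (abs_sub _ _).trans (add_le_add (hM x) le_rfl)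
  have h2 : |ind B x| ≤ 1 := by
    rw [abs_of_nonneg (aux_ind_nonneg B x)]; exact aux_ind_le_one B x
  calc |(f x - m) * ind B x| = |f x - m| * |ind B x| := abs_mul _ _
    _ ≤ (M + |m|) * 1 := mul_le_mul h1 h2 (abs_nonneg _)
        (le_trans (abs_nonneg _) h1)
    _ = M + |m| := mul_one _

lemma aux_sum_mem {D : Set (X → ℝ)} (hD : ∀ f ∈ D, ∀ g ∈ D, f + g ∈ D)
    {n : ℕ} (g : Fin (n + 1) → X → ℝ) (hg : ∀ i, g i ∈ D) : ∑ i, g i ∈ D := by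
  induction n with
  | zero => simpa using hg 0
  | succ n ih =>
      rw [Fin.sum_univ_castSucc]
      exact hD _ (ih _ (fun i => hg _)) _ (hg _)

lemma aux_posi_subset {A D : Set (X → ℝ)} (hAD : A ⊆ D)
    (h2 : ∀ f ∈ D, ∀ l : ℝ, 0 < l → l • f ∈ D)
    (h3 : ∀ f ∈ D, ∀ g ∈ D, f + g ∈ D) : posi A ⊆ D := by
  rintro g ⟨n, l, h, hl, hh, rfl⟩
  exact aux_sum_mem h3 _ (fun i => h2 _ (hAD (hh i)) _ (hl i))

lemma aux_mem_posi_self {A : Set (X → ℝ)} {f : X → ℝ} (hf : f ∈ A) : f ∈ posi A :=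
  ⟨0, fun _ => 1, fun _ => f, fun _ => one_pos, fun _ => hf, by simp⟩

lemma aux_posi_smul {A : Set (X → ℝ)} {f : X → ℝ} (hf : f ∈ posi A) {c : ℝ}
    (hc : 0 < c) : c • f ∈ posi A := by
  obtain ⟨n, l, h, hl, hh, rfl⟩ := hf
  exact ⟨n, fun i => c * l i, h, fun i => mul_pos hc (hl i), hh, by
    simp [Finset.smul_sum, mul_smul]⟩

lemma aux_posi_add {A : Set (X → ℝ)} {f g : X → ℝ} (hf : f ∈ posi A)
    (hg : g ∈ posi A) : f + g ∈ posi A := by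
  obtain ⟨n, l, h, hl, hh, rfl⟩ := hf
  obtain ⟨m, l', h', hl', hh', rfl⟩ := hg
  have e : Fin (n + m + 1 + 1) ≃ Fin (n + 1) ⊕ Fin (m + 1) :=
    (finCongr (by omega)).trans finSumFinEquiv.symm
  refine ⟨n + m + 1, Sum.elim l l' ∘ e, Sum.elim h h' ∘ e,
    fun i => ?_, fun i => ?_, ?_⟩
  · rcases hei : e i with j | j <;> simp [Function.comp, hei, hl, hl']
  · rcases hei : e i with j | j <;> simp [Function.comp, hei, hh, hh']
  · have := Equiv.sum_comp e (fun j => Sum.elim l l' j • Sum.elim h h' j)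
    simp only [Function.comp]
    rw [this, Fintype.sum_sum_type]
    simp

lemma aux_ereal_le_of_real_lt {a b : EReal}
    (h : ∀ m : ℝ, (m : EReal) < a → (m : EReal) ≤ b) : a ≤ b := by
  by_contra hba
  push_neg at hba
  obtain ⟨m, hbm, hma⟩ := EReal.exists_between_coe_real hba
  exact absurd (h m hma) (not_le.mpr hbm)

/-- `A_lp` is contained in every coherent `D` inducing `lp` on `C`. -/
lemma aux_Alp_subset {C : Set ((X → ℝ) × Set X)} (hC : C ⊆ domC X)
    {lp : (X → ℝ) → Set X → EReal} {D : Set (X → ℝ)} (hD : CoherentSDG D)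
    (h : ∀ p ∈ C, lp p.1 p.2 = lpOf D p.1 p.2) : Alp C lp ⊆ D := by
  rintro g ⟨p, hp, m, hm, rfl⟩
  rw [h p hp] at hm
  obtain ⟨y, hy, hmy⟩ := lt_sSup_iff.mp hm
  obtain ⟨m', hm'S, rfl⟩ := hy
  have hmm' : m < m' := by exact_mod_cast hmy
  obtain ⟨x0, hx0⟩ := (hC hp).2
  have key : (fun x => (p.1 x - m) * ind p.2 x) =
      (fun x => (p.1 x - m') * ind p.2 x) + (fun x => (m' - m) * ind p.2 x) := by
    funext x; simp only [Pi.add_apply]; ring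
  rw [key]
  refine hD.d3 _ hm'S _ (hD.d1 _ ?_ ?_ ?_)
  · refine ⟨m' - m, fun x => ?_⟩
    rw [abs_mul, abs_of_nonneg (aux_ind_nonneg p.2 x),
      abs_of_nonneg (le_of_lt (sub_pos.mpr hmm'))]
    calc (m' - m) * ind p.2 x ≤ (m' - m) * 1 :=
          mul_le_mul_of_nonneg_left (aux_ind_le_one p.2 x)
            (le_of_lt (sub_pos.mpr hmm'))
      _ = m' - m := mul_one _
  · exact fun x => mul_nonneg (le_of_lt (sub_pos.mpr hmm')) (aux_ind_nonneg p.2 x)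
  · intro hzero
    have := congrFun hzero x0
    rw [aux_ind_mem hx0] at this
    simp at this
    linarith

/-- `E(lp)` is contained in every coherent `D` inducing `lp` on `C`. -/
lemma aux_Elp_subset {C : Set ((X → ℝ) × Set X)} (hC : C ⊆ domC X)
    {lp : (X → ℝ) → Set X → EReal} {D : Set (X → ℝ)} (hD : CoherentSDG D)
    (h : ∀ p ∈ C, lp p.1 p.2 = lpOf D p.1 p.2) : ElpSet C lp ⊆ D := by
  refine aux_posi_subset ?_ hD.d2 hD.d3
  rintro g (hg | hg)
  · exact aux_Alp_subset hC hD h hg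
  · exact hD.d1 g hg.1 hg.2.1 hg.2.2

end Aux

/-- Proposition 4: `E(lp)` is the smallest coherent set of desirable
gambles inducing `lp` on `C`. -/
theorem stmt3 {X : Type*} [Nonempty X] (C : Set ((X → ℝ) × Set X)) (hC : C ⊆ domC X)
    (lp : (X → ℝ) → Set X → EReal) (hlp : Coherent C lp) :
    CoherentSDG (ElpSet C lp) ∧
    (∀ p ∈ C, lpOf (ElpSet C lp) p.1 p.2 = lp p.1 p.2) ∧
    (∀ D : Set (X → ℝ), CoherentSDG D → (∀ p ∈ C, lpOf D p.1 p.2 = lp p.1 p.2) →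
      ElpSet C lp ⊆ D) := by
  obtain ⟨D, hD, heq⟩ := hlp
  have hsub : ElpSet C lp ⊆ D := aux_Elp_subset hC hD heq
  have hcoh : CoherentSDG (ElpSet C lp) := by
    constructor
    · -- every element is a gamble
      rintro g ⟨n, l, h, hl, hh, rfl⟩
      refine Finset.sum_induction _ IsGamble
        (fun a b ha hb => aux_isGamble_add ha hb) ⟨0, by simp⟩ (fun i _ => ?_)
      refine aux_isGamble_smul _ ?_
      rcases hh i with hg | hg
      · obtain ⟨p, hp, m, _, hgeq⟩ := hg
        rw [hgeq]
        exact aux_isGamble_mul_ind (hC hp).1 m p.2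
      · exact hg.1
    · exact fun f hf h0 hne => aux_mem_posi_self (Or.inr ⟨hf, h0, hne⟩)
    · exact fun f hf l hl => aux_posi_smul hf hl
    · exact fun f hf g hg => aux_posi_add hf hg
    · exact fun f hf hmem => hD.d4 f hf (hsub hmem)
  refine ⟨hcoh, fun p hp => ?_, fun D' hD' heq' => aux_Elp_subset hC hD'
    (fun q hq => (heq' q hq).symm)⟩
  apply le_antisymm
  · rw [heq p hp]
    exact sSup_le_sSup (Set.image_mono (fun m hm => hsub hm))
  · refine aux_ereal_le_of_real_lt (fun m hm => ?_)
    refine le_sSup ⟨m, ?_, rfl⟩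
    exact aux_mem_posi_self (Or.inl ⟨p, hp, m, hm, rfl⟩)

end IPaper
end

section
/- Let D1 and D2 be coherent sets of desirable gambles on the nonempty sets X1 and X2 respectively, and let 𝔅_1 ⊆ P_∅(X1), 𝔅_2 ⊆ P_∅(X2). Then D1 ⊗ D2 := E(A_{1→2} ∪ A_{2→1}) is a coherent set of desirable gambles on X1 × X2. -/
open scoped BigOperators

namespace IPaper

variable {X : Type*}

section AuxHelpers

variable {Y : Type*}

lemma ind_of_mem' {B : Set Y} {x : Y} (h : x ∈ B) : ind B x = 1 := by
  simp [ind, Set.indicator_of_mem h]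

lemma ind_of_not_mem' {B : Set Y} {x : Y} (h : x ∉ B) : ind B x = 0 := by
  simp [ind, Set.indicator_of_notMem h]

lemma ind_nonneg' (B : Set Y) (x : Y) : 0 ≤ ind B x := by
  by_cases h : x ∈ B
  · rw [ind_of_mem' h]; norm_num
  · rw [ind_of_not_mem' h]

lemma ind_le_one' (B : Set Y) (x : Y) : ind B x ≤ 1 := by
  by_cases h : x ∈ B
  · rw [ind_of_mem' h]
  · rw [ind_of_not_mem' h]; norm_num

lemma isGamble_ind (B : Set Y) : IsGamble (ind B) := by
  refine ⟨1, fun x => ?_⟩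
  rw [abs_le]
  exact ⟨by linarith [ind_nonneg' B x], ind_le_one' B x⟩

lemma isGamble_zero : IsGamble (fun _ : Y => (0:ℝ)) :=
  ⟨0, fun x => by simp⟩

lemma IsGamble.add' {f g : Y → ℝ} (hf : IsGamble f) (hg : IsGamble g) :
    IsGamble (fun x => f x + g x) := by
  obtain ⟨M, hM⟩ := hf; obtain ⟨K, hK⟩ := hg
  exact ⟨M + K, fun x => (abs_add_le _ _).trans (add_le_add (hM x) (hK x))⟩

lemma IsGamble.neg' {f : Y → ℝ} (hf : IsGamble f) : IsGamble (fun x => - f x) := by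
  obtain ⟨M, hM⟩ := hf
  exact ⟨M, fun x => by rw [abs_neg]; exact hM x⟩

lemma IsGamble.sub' {f g : Y → ℝ} (hf : IsGamble f) (hg : IsGamble g) :
    IsGamble (fun x => f x - g x) := by
  have := hf.add' hg.neg'
  simpa [sub_eq_add_neg] using this

lemma isGamble_const (c : ℝ) : IsGamble (fun _ : Y => c) :=
  ⟨|c|, fun _ => le_rfl⟩

lemma IsGamble.mul' {f g : Y → ℝ} (hf : IsGamble f) (hg : IsGamble g) :
    IsGamble (fun x => f x * g x) := by
  obtain ⟨M, hM⟩ := hf; obtain ⟨K, hK⟩ := hg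
  refine ⟨M * K, fun x => ?_⟩
  rw [abs_mul]
  have h0 : (0:ℝ) ≤ |f x| := abs_nonneg _
  have h1 : (0:ℝ) ≤ K := le_trans (abs_nonneg _) (hK x)
  calc |f x| * |g x| ≤ M * |g x| := by
        exact mul_le_mul_of_nonneg_right (hM x) (abs_nonneg _)
    _ ≤ M * K := by
        have hM0 : (0:ℝ) ≤ M := le_trans (abs_nonneg _) (hM x)
        exact mul_le_mul_of_nonneg_left (hK x) hM0

lemma IsGamble.smul' {f : Y → ℝ} (c : ℝ) (hf : IsGamble f) :
    IsGamble (fun x => c * f x) :=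
  (isGamble_const c).mul' hf

lemma isGamble_finsum {ι : Type*} (S : Finset ι) (f : ι → Y → ℝ)
    (hf : ∀ i ∈ S, IsGamble (f i)) : IsGamble (fun x => ∑ i ∈ S, f i x) := by
  classical
  induction S using Finset.induction_on with
  | empty => simpa using isGamble_zero
  | insert a s hnot ih =>
      simp only [Finset.sum_insert hnot]
      exact (hf a (Finset.mem_insert_self a s)).add'
        (ih (fun i hi => hf i (Finset.mem_insert_of_mem hi)))

lemma Gpos_exists_pos {f : Y → ℝ} (hf : f ∈ Gpos Y) : ∃ x, 0 < f x := by
  obtain ⟨-, h0, hne⟩ := hf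
  by_contra hcon
  push_neg at hcon
  exact hne (funext fun x => le_antisymm (hcon x) (h0 x))

lemma CoherentSDG.exists_pos {D : Set (Y → ℝ)} (hD : CoherentSDG D) {f : Y → ℝ}
    (hf : f ∈ D) : ∃ x, 0 < f x := by
  by_contra hcon
  push_neg at hcon
  exact hD.d4 f (fun x => hcon x) hf

lemma CoherentSDG.mem_of_le {D : Set (Y → ℝ)} (hD : CoherentSDG D) {d e : Y → ℝ}
    (hd : d ∈ D) (hle : ∀ x, d x ≤ e x) (he : IsGamble e) : e ∈ D := by
  by_cases h : e = d
  · rwa [h]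
  · have hgam : IsGamble (fun x => e x - d x) := he.sub' (hD.subset_gambles d hd)
    have hke : (fun x => e x - d x) ≠ 0 := by
      intro h0
      apply h
      funext x
      have := congrFun h0 x
      simp only [Pi.zero_apply] at this
      linarith
    have hk : (fun x => e x - d x) ∈ D :=
      hD.d1 _ hgam (fun x => by simp [hle x]) hke
    have := hD.d3 d hd _ hk
    have heq : d + (fun x => e x - d x) = e := by
      funext x; simp
    rwa [heq] at this

lemma CoherentSDG.sum_mem' {ι : Type*} {D : Set (Y → ℝ)} (hD : CoherentSDG D)
    {S : Finset ι} (hS : S.Nonempty) {c : ι → ℝ} {f : ι → Y → ℝ}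
    (hc : ∀ i ∈ S, 0 < c i) (hf : ∀ i ∈ S, f i ∈ D) :
    (fun x => ∑ i ∈ S, c i * f i x) ∈ D := by
  classical
  induction S using Finset.induction_on with
  | empty => exact absurd hS (by simp)
  | insert a s hnot ih =>
      by_cases hs : s.Nonempty
      · have h1 : (fun x => c a * f a x) ∈ D := by
          have := hD.d2 (f a) (hf a (Finset.mem_insert_self a s)) (c a)
            (hc a (Finset.mem_insert_self a s))
          exact this
        have h2 := ih hs (fun i hi => hc i (Finset.mem_insert_of_mem hi))
          (fun i hi => hf i (Finset.mem_insert_of_mem hi))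
        have := hD.d3 _ h1 _ h2
        have heq : ((fun x => c a * f a x) + fun x => ∑ i ∈ s, c i * f i x)
            = fun x => ∑ i ∈ insert a s, c i * f i x := by
          funext x
          simp [Finset.sum_insert hnot]
        rwa [heq] at this
      · have hse : s = ∅ := Finset.not_nonempty_iff_eq_empty.mp hs
        subst hse
        have := hD.d2 (f a) (hf a (by simp)) (c a) (hc a (by simp))
        have heq : c a • f a = fun x => ∑ i ∈ insert a (∅ : Finset ι), c i * f i x := by
          funext x; simp
        rwa [heq] at this

end AuxHelpers

section NWsection

variable {Y : Type*}

/-- The set used to define the conditional upper prevision. -/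
def NWset (D : Set (Y → ℝ)) (W : Set Y) (h : Y → ℝ) : Set ℝ :=
  {μ : ℝ | (fun x => (μ - h x) * ind W x) ∈ D}

/-- Conditional upper prevision of `h` given `W`, relative to `D`. -/
noncomputable def NW (D : Set (Y → ℝ)) (W : Set Y) (h : Y → ℝ) : ℝ :=
  sInf (NWset D W h)

variable {D : Set (Y → ℝ)} {W : Set Y}

lemma isGamble_NWel {h : Y → ℝ} (hh : IsGamble h) (μ : ℝ) :
    IsGamble (fun x => (μ - h x) * ind W x) :=
  ((isGamble_const μ).sub' hh).mul' (isGamble_ind W)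

lemma NWset_nonempty (hD : CoherentSDG D) (hW : W.Nonempty) {h : Y → ℝ}
    (hh : IsGamble h) : (NWset D W h).Nonempty := by
  obtain ⟨M, hM⟩ := id hh
  obtain ⟨w, hw⟩ := hW
  refine ⟨M + 1, ?_⟩
  have hpos : ∀ x, 0 ≤ (M + 1 - h x) * ind W x := by
    intro x
    have : h x ≤ M := (abs_le.mp (hM x)).2
    have h1 : (0:ℝ) ≤ M + 1 - h x := by linarith
    exact mul_nonneg h1 (ind_nonneg' W x)
  refine hD.d1 _ (isGamble_NWel hh _) (fun x => hpos x) ?_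
  intro h0
  have := congrFun h0 w
  simp only [Pi.zero_apply] at this
  rw [ind_of_mem' hw, mul_one] at this
  have : h w ≤ M := (abs_le.mp (hM w)).2
  have h2 := congrFun h0 w
  simp only [Pi.zero_apply, ind_of_mem' hw, mul_one] at h2
  linarith

lemma NWset_lb (hD : CoherentSDG D) {h : Y → ℝ} {M : ℝ} (hM : ∀ x, |h x| ≤ M)
    {μ : ℝ} (hμ : μ ∈ NWset D W h) : -M ≤ μ := by
  have hne := hD.d4 (fun x => (μ - h x) * ind W x)
  by_contra hcon
  push_neg at hcon
  refine hne (fun x => ?_) hμ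
  show (μ - h x) * ind W x ≤ 0
  by_cases hx : x ∈ W
  · rw [ind_of_mem' hx, mul_one]
    have := (abs_le.mp (hM x)).1
    linarith
  · simp [ind_of_not_mem' hx]

lemma NWset_bddBelow (hD : CoherentSDG D) {h : Y → ℝ} (hh : IsGamble h) :
    BddBelow (NWset D W h) := by
  obtain ⟨M, hM⟩ := hh
  exact ⟨-M, fun μ hμ => NWset_lb hD hM hμ⟩

lemma NW_le_of_mem (hD : CoherentSDG D) {h : Y → ℝ} (hh : IsGamble h) {μ : ℝ}
    (hμ : μ ∈ NWset D W h) : NW D W h ≤ μ :=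
  csInf_le (NWset_bddBelow hD hh) hμ

lemma NW_le_zero_of (hD : CoherentSDG D) {h : Y → ℝ} (hh : IsGamble h)
    (hall : ∀ μ : ℝ, 0 < μ → μ ∈ NWset D W h) : NW D W h ≤ 0 := by
  by_contra hcon
  push_neg at hcon
  have h1 : NW D W h ≤ NW D W h / 2 :=
    NW_le_of_mem hD hh (hall _ (by linarith))
  linarith

lemma NW_nonpos (hD : CoherentSDG D) (hW : W.Nonempty) {h : Y → ℝ}
    (hh : IsGamble h) (hle : ∀ x ∈ W, h x ≤ 0) : NW D W h ≤ 0 := by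
  obtain ⟨w, hw⟩ := hW
  refine NW_le_zero_of hD hh (fun μ hμ => ?_)
  refine hD.d1 _ (isGamble_NWel hh _) (fun x => ?_) ?_
  · by_cases hx : x ∈ W
    · rw [ind_of_mem' hx, mul_one]
      have := hle x hx
      simp only [Pi.zero_apply]
      linarith
    · simp [ind_of_not_mem' hx]
  · intro h0
    have := congrFun h0 w
    simp only [Pi.zero_apply, ind_of_mem' hw, mul_one] at this
    have := hle w hw
    linarith [congrFun h0 w, ind_of_mem' hw]

lemma NW_zero (hD : CoherentSDG D) (hW : W.Nonempty) :
    NW D W (fun _ => (0:ℝ)) = 0 := by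
  refine le_antisymm (NW_nonpos hD hW isGamble_zero (fun x _ => le_rfl)) ?_
  refine le_csInf (NWset_nonempty hD hW isGamble_zero) (fun μ hμ => ?_)
  obtain ⟨x, hx⟩ := hD.exists_pos hμ
  by_cases hxW : x ∈ W
  · rw [ind_of_mem' hxW, mul_one, sub_zero] at hx
    linarith
  · rw [ind_of_not_mem' hxW, mul_zero] at hx
    linarith

lemma NW_add_le (hD : CoherentSDG D) (hW : W.Nonempty) {h k : Y → ℝ}
    (hh : IsGamble h) (hk : IsGamble k) :
    NW D W (fun x => h x + k x) ≤ NW D W h + NW D W k := by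
  have hmem : ∀ μ ∈ NWset D W h, ∀ ν ∈ NWset D W k,
      μ + ν ∈ NWset D W (fun x => h x + k x) := by
    intro μ hμ ν hν
    have := hD.d3 _ hμ _ hν
    have heq : ((fun x => (μ - h x) * ind W x) + fun x => (ν - k x) * ind W x)
        = fun x => (μ + ν - (h x + k x)) * ind W x := by
      funext x; simp; ring
    rwa [heq] at this
  have h2 : ∀ ν ∈ NWset D W k, NW D W (fun x => h x + k x) - ν ≤ NW D W h := by
    intro ν hν
    refine le_csInf (NWset_nonempty hD hW hh) (fun μ hμ => ?_)
    have := NW_le_of_mem hD (hh.add' hk) (hmem μ hμ ν hν)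
    linarith
  have h3 : ∀ ν ∈ NWset D W k, NW D W (fun x => h x + k x) - NW D W h ≤ ν := by
    intro ν hν
    linarith [h2 ν hν]
  have h4 : NW D W (fun x => h x + k x) - NW D W h ≤ NW D W k :=
    le_csInf (NWset_nonempty hD hW hk) h3
  linarith

lemma NW_smul (hD : CoherentSDG D) (hW : W.Nonempty) {h : Y → ℝ}
    (hh : IsGamble h) {c : ℝ} (hc : 0 < c) :
    NW D W (fun x => c * h x) = c * NW D W h := by
  have hdir : ∀ μ ∈ NWset D W h, c * μ ∈ NWset D W (fun x => c * h x) := by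
    intro μ hμ
    have := hD.d2 _ hμ c hc
    have heq : c • (fun x => (μ - h x) * ind W x)
        = fun x => (c * μ - c * h x) * ind W x := by
      funext x
      simp only [Pi.smul_apply, smul_eq_mul]
      ring
    rwa [heq] at this
  have hinv : ∀ ν ∈ NWset D W (fun x => c * h x), c⁻¹ * ν ∈ NWset D W h := by
    intro ν hν
    have := hD.d2 _ hν c⁻¹ (by positivity)
    have heq : c⁻¹ • (fun x => (ν - c * h x) * ind W x)
        = fun x => (c⁻¹ * ν - h x) * ind W x := by
      funext x
      simp only [Pi.smul_apply, smul_eq_mul]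
      field_simp
      try ring
    rwa [heq] at this
  refine le_antisymm ?_ ?_
  · have : ∀ μ ∈ NWset D W h, NW D W (fun x => c * h x) ≤ c * μ := by
      intro μ hμ
      exact NW_le_of_mem hD (hh.smul' c) (hdir μ hμ)
    have h2 : ∀ μ ∈ NWset D W h, c⁻¹ * NW D W (fun x => c * h x) ≤ μ := by
      intro μ hμ
      have := this μ hμ
      rw [← mul_le_mul_iff_right₀ hc]
      calc c * (c⁻¹ * NW D W (fun x => c * h x)) = NW D W (fun x => c * h x) := by
            field_simp
        _ ≤ c * μ := this
    have h3 : c⁻¹ * NW D W (fun x => c * h x) ≤ NW D W h :=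
      le_csInf (NWset_nonempty hD hW hh) h2
    calc NW D W (fun x => c * h x) = c * (c⁻¹ * NW D W (fun x => c * h x)) := by
          field_simp
      _ ≤ c * NW D W h := by
          exact mul_le_mul_of_nonneg_left h3 hc.le
  · have h2 : ∀ ν ∈ NWset D W (fun x => c * h x), c * NW D W h ≤ ν := by
      intro ν hν
      have := NW_le_of_mem hD hh (hinv ν hν)
      calc c * NW D W h ≤ c * (c⁻¹ * ν) := mul_le_mul_of_nonneg_left this hc.le
        _ = ν := by field_simp
    exact le_csInf (NWset_nonempty hD hW (hh.smul' c)) h2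

lemma NW_neg_nonpos (hD : CoherentSDG D) (hW : W.Nonempty) {h : Y → ℝ}
    (hh : IsGamble h)
    (hmem : ((fun x => h x * ind W x) ∈ D) ∨ (∀ x, 0 ≤ h x * ind W x)) :
    NW D W (fun x => - h x) ≤ 0 := by
  obtain ⟨w, hw⟩ := hW
  refine NW_le_zero_of hD hh.neg' (fun μ hμ => ?_)
  have heq : (fun x => (μ - (- h x)) * ind W x)
      = (fun x => μ * ind W x) + (fun x => h x * ind W x) := by
    funext x; simp; ring
  have hμind : (fun x => μ * ind W x) ∈ D := by
    refine hD.d1 _ ((isGamble_const μ).mul' (isGamble_ind W))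
      (fun x => mul_nonneg hμ.le (ind_nonneg' W x)) ?_
    intro h0
    have := congrFun h0 w
    simp only [Pi.zero_apply, ind_of_mem' hw, mul_one] at this
    linarith
  show (fun x => (μ - (- h x)) * ind W x) ∈ D
  rw [heq]
  rcases hmem with hm | hm
  · exact hD.d3 _ hμind _ hm
  · refine hD.mem_of_le hμind (fun x => ?_) ?_
    · simp only [Pi.add_apply]
      linarith [hm x]
    · exact (((isGamble_const μ).mul' (isGamble_ind W)).add'
        (hh.mul' (isGamble_ind W)))

end NWsection
section HBsection

variable {Y : Type*}

/-- The submodule of all gambles on `Y`. -/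
def gambleSub (Y : Type*) : Submodule ℝ (Y → ℝ) where
  carrier := {f | IsGamble f}
  add_mem' := fun hf hg => by
    have := IsGamble.add' hf hg
    simpa [Pi.add_def] using this
  zero_mem' := by
    have := isGamble_zero (Y := Y)
    exact this
  smul_mem' := fun c f hf => by
    have := IsGamble.smul' c hf
    simpa [Pi.smul_def, smul_eq_mul] using this

/-- Hahn-Banach: a linear functional dominated by the conditional upper prevision
and attaining it at the indicator of `B`. -/
lemma exists_extension_phi {D : Set (Y → ℝ)} (hD : CoherentSDG D)
    {W : Set Y} (hW : W.Nonempty) {B : Set Y} (hBne : B.Nonempty) :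
    ∃ φ : ↥(gambleSub Y) →ₗ[ℝ] ℝ,
      (∀ v : ↥(gambleSub Y), φ v ≤ NW D W ((v : Y → ℝ))) ∧
      φ ⟨ind B, isGamble_ind B⟩ = NW D W (ind B) := by
  classical
  set v0 : ↥(gambleSub Y) := ⟨ind B, isGamble_ind B⟩ with hv0def
  have hv0ne : v0 ≠ 0 := by
    intro h0
    obtain ⟨x, hx⟩ := hBne
    have h1 := congrArg (fun v : ↥(gambleSub Y) => (v : Y → ℝ) x) h0
    simp only [hv0def] at h1
    rw [ind_of_mem' hx] at h1
    simpa using h1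
  have hH : ∀ c : ℝ, c • v0 = 0 → c • NW D W (ind B) = 0 := by
    intro c hc
    by_cases hc0 : c = 0
    · simp [hc0]
    · exfalso
      apply hv0ne
      have h1 := congrArg (fun v : ↥(gambleSub Y) => c⁻¹ • v) hc
      simpa [smul_smul, inv_mul_cancel₀ hc0] using h1
  have hNhom : ∀ c : ℝ, 0 < c → ∀ v : ↥(gambleSub Y),
      NW D W ((c • v : ↥(gambleSub Y)) : Y → ℝ) = c * NW D W (v : Y → ℝ) := by
    intro c hc v
    have hcoe : ((c • v : ↥(gambleSub Y)) : Y → ℝ)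
        = fun x => c * (v : Y → ℝ) x := rfl
    rw [hcoe]
    exact NW_smul hD hW v.2 hc
  have hNadd : ∀ v w : ↥(gambleSub Y),
      NW D W ((v + w : ↥(gambleSub Y)) : Y → ℝ)
        ≤ NW D W (v : Y → ℝ) + NW D W (w : Y → ℝ) := by
    intro v w
    have hcoe : ((v + w : ↥(gambleSub Y)) : Y → ℝ)
        = fun x => (v : Y → ℝ) x + (w : Y → ℝ) x := rfl
    rw [hcoe]
    exact NW_add_le hD hW v.2 w.2
  have hfle0 : ∀ z : (LinearPMap.mkSpanSingleton' (σ := RingHom.id ℝ) v0 (NW D W (ind B)) hH).domain,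
      (LinearPMap.mkSpanSingleton' (σ := RingHom.id ℝ) v0 (NW D W (ind B)) hH) z
        ≤ NW D W ((z : ↥(gambleSub Y)) : Y → ℝ) := by
    rintro ⟨z, hz⟩
    have hz' : z ∈ (Submodule.span ℝ {v0}) := by
      rw [← LinearPMap.domain_mkSpanSingleton (σ := RingHom.id ℝ) v0 (NW D W (ind B)) hH]
      exact hz
    obtain ⟨c, hc⟩ := Submodule.mem_span_singleton.mp hz'
    have happ : (LinearPMap.mkSpanSingleton' (σ := RingHom.id ℝ) v0 (NW D W (ind B)) hH)
        ⟨z, hz⟩ = c * NW D W (ind B) := by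
      have h1 := LinearPMap.mkSpanSingleton'_apply v0
        (NW D W (ind B)) hH c (by rw [hc]; exact hz)
      have h2 : (⟨c • v0, by rw [hc]; exact hz⟩ :
          (LinearPMap.mkSpanSingleton' (σ := RingHom.id ℝ) v0 (NW D W (ind B)) hH).domain)
          = ⟨z, hz⟩ := by
        apply Subtype.ext
        exact hc
      rw [h2] at h1
      rw [h1]
      simp [smul_eq_mul]
    rw [happ]
    have hzcoe : ((⟨z, hz⟩ : (LinearPMap.mkSpanSingleton' (σ := RingHom.id ℝ) v0
        (NW D W (ind B)) hH).domain) : ↥(gambleSub Y)) = z := rfl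
    rw [hzcoe]
    have hzfun : (z : Y → ℝ) = fun x => c * ind B x := by
      rw [← hc]
      rfl
    rw [hzfun]
    rcases lt_trichotomy c 0 with hcneg | hc0 | hcpos
    · have hnegpos : 0 < -c := by linarith
      have h3 : NW D W (fun x => (-c) * ind B x)
          = (-c) * NW D W (ind B) :=
        NW_smul hD hW (isGamble_ind _) hnegpos
      have h4 : NW D W (fun x => c * ind B x + (-c) * ind B x)
          ≤ NW D W (fun x => c * ind B x)
            + NW D W (fun x => (-c) * ind B x) :=
        NW_add_le hD hW ((isGamble_ind _).smul' c)
          ((isGamble_ind _).smul' (-c))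
      have h5 : (fun x => c * ind B x + (-c) * ind B x)
          = fun _ : Y => (0:ℝ) := by
        funext x
        ring
      rw [h5, NW_zero hD hW, h3] at h4
      linarith
    · subst hc0
      have h5 : (fun x : Y => (0:ℝ) * ind B x) = fun _ : Y => (0:ℝ) := by
        funext x
        ring
      rw [h5, NW_zero hD hW]
      simp
    · rw [NW_smul hD hW (isGamble_ind _) hcpos]
  obtain ⟨φ, hφeq, hφle⟩ := exists_extension_of_le_sublinear
    (LinearPMap.mkSpanSingleton' (σ := RingHom.id ℝ) v0 (NW D W (ind B)) hH)
    (fun v => NW D W (v : Y → ℝ)) hNhom hNadd hfle0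
  refine ⟨φ, hφle, ?_⟩
  have hmem : v0 ∈ (LinearPMap.mkSpanSingleton' (σ := RingHom.id ℝ) v0 (NW D W (ind B)) hH).domain := by
    rw [LinearPMap.domain_mkSpanSingleton]
    exact Submodule.mem_span_singleton_self v0
  have h1 : φ v0 = (LinearPMap.mkSpanSingleton' (σ := RingHom.id ℝ) v0 (NW D W (ind B)) hH)
      ⟨v0, hmem⟩ := hφeq ⟨v0, hmem⟩
  have h2 : (LinearPMap.mkSpanSingleton' (σ := RingHom.id ℝ) v0 (NW D W (ind B)) hH)
      ⟨v0, hmem⟩ = NW D W (ind B) :=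
    LinearPMap.mkSpanSingleton'_apply_self v0 _ hH hmem
  rw [h1]
  exact h2

lemma phi_nonneg {D : Set (Y → ℝ)} (hD : CoherentSDG D)
    {W : Set Y} (hW : W.Nonempty) {φ : ↥(gambleSub Y) →ₗ[ℝ] ℝ}
    (hφle : ∀ v : ↥(gambleSub Y), φ v ≤ NW D W ((v : Y → ℝ)))
    (v : ↥(gambleSub Y))
    (hv : ((fun x => (v : Y → ℝ) x * ind W x) ∈ D)
      ∨ ∀ x, 0 ≤ (v : Y → ℝ) x * ind W x) : 0 ≤ φ v := by
  have h1 : φ (-v) ≤ NW D W ((-v : ↥(gambleSub Y)) : Y → ℝ) := hφle (-v)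
  have h2 : φ (-v) = - φ v := map_neg φ v
  have h3 : ((-v : ↥(gambleSub Y)) : Y → ℝ) = fun x => - (v : Y → ℝ) x := rfl
  rw [h2, h3] at h1
  have h4 := NW_neg_nonpos hD hW v.2 hv
  linarith

end HBsection

lemma memA_isGamble {X1 X2 : Type*} {D1 : Set (X1 → ℝ)} {D2 : Set (X2 → ℝ)}
    {F1 : Set (Set X1)} {F2 : Set (Set X2)}
    (hD1 : CoherentSDG D1) (hD2 : CoherentSDG D2) {g : X1 × X2 → ℝ}
    (hg : g ∈ (A12 D2 F1 ∪ A21 D1 F2) ∪ Gpos (X1 × X2)) : IsGamble g := by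
  rcases hg with (⟨f2, hf2, B1, _, rfl⟩ | ⟨f1, hf1, B2, _, rfl⟩) | hgp
  · obtain ⟨M, hM⟩ := hD2.subset_gambles f2 hf2
    have : IsGamble (fun p : X1 × X2 => f2 p.2) := ⟨M, fun p => hM p.2⟩
    exact this.mul' (⟨1, fun p => by
      rw [abs_le]
      exact ⟨by linarith [ind_nonneg' B1 p.1], ind_le_one' B1 p.1⟩⟩)
  · obtain ⟨M, hM⟩ := hD1.subset_gambles f1 hf1
    have : IsGamble (fun p : X1 × X2 => f1 p.1) := ⟨M, fun p => hM p.1⟩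
    exact this.mul' (⟨1, fun p => by
      rw [abs_le]
      exact ⟨by linarith [ind_nonneg' B2 p.2], ind_le_one' B2 p.2⟩⟩)
  · exact hgp.1

lemma indNatExt_isGamble {X1 X2 : Type*} {D1 : Set (X1 → ℝ)} {D2 : Set (X2 → ℝ)}
    {F1 : Set (Set X1)} {F2 : Set (Set X2)}
    (hD1 : CoherentSDG D1) (hD2 : CoherentSDG D2) {g : X1 × X2 → ℝ}
    (hg : g ∈ indNatExt D1 D2 F1 F2) : IsGamble g := by
  obtain ⟨n, l, h, hl, hh, rfl⟩ := hg
  have : IsGamble (fun p => ∑ i : Fin (n+1), l i * h i p) := by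
    refine isGamble_finsum _ _ (fun i _ => ?_)
    exact (memA_isGamble hD1 hD2 (hh i)).smul' (l i)
  have heq : (∑ i : Fin (n+1), l i • h i) = fun p => ∑ i : Fin (n+1), l i * h i p := by
    funext p
    simp [Finset.sum_apply]
  rwa [heq]

set_option maxHeartbeats 4000000 in
/-- Proposition 10: `D1 ⊗ D2` is a coherent set of desirable gambles
on `X1 × X2`. -/
theorem stmt8 {X1 X2 : Type*} [Nonempty X1] [Nonempty X2]
    (D1 : Set (X1 → ℝ)) (D2 : Set (X2 → ℝ))
    (hD1 : CoherentSDG D1) (hD2 : CoherentSDG D2)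
    (F1 : Set (Set X1)) (F2 : Set (Set X2))
    (hF1 : ∀ A ∈ F1, A.Nonempty) (hF2 : ∀ A ∈ F2, A.Nonempty) :
    CoherentSDG (indNatExt D1 D2 F1 F2) := by
  classical
  constructor
  · exact fun f hf => indNatExt_isGamble hD1 hD2 hf
  · -- d1
    intro f hf h0 hne
    refine ⟨0, fun _ => 1, fun _ => f, fun _ => one_pos,
      fun _ => Or.inr ⟨hf, h0, hne⟩, ?_⟩
    simp
  · -- d2
    rintro f ⟨n, l, h, hl, hh, rfl⟩ lam hlam
    refine ⟨n, fun i => lam * l i, h, fun i => mul_pos hlam (hl i), hh, ?_⟩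
    rw [Finset.smul_sum]
    exact Finset.sum_congr rfl (fun i _ => (mul_smul lam (l i) (h i)).symm)
  · -- d3
    rintro f ⟨n, l, h, hl, hh, rfl⟩ g ⟨m, l', h', hl', hh', rfl⟩
    refine ⟨n + m + 1, ?_, ?_, ?_, ?_, ?_⟩
    · exact fun i => Sum.elim l l' ((finSumFinEquiv.trans (finCongr (by omega))).symm i)
    · exact fun i => Sum.elim h h' ((finSumFinEquiv.trans (finCongr (by omega))).symm i)
    · intro i
      rcases (finSumFinEquiv.trans (finCongr (by omega))).symm i with j | j
      all_goals simp_all [hl, hl']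
    · intro i
      rcases (finSumFinEquiv.trans (finCongr (by omega))).symm i with j | j
      · exact hh j
      · exact hh' j
    · symm
      calc ∑ i : Fin (n+m+1+1),
            Sum.elim l l' ((finSumFinEquiv.trans (finCongr (by omega :
              (n+1)+(m+1) = n+m+1+1))).symm i) •
            Sum.elim h h' ((finSumFinEquiv.trans (finCongr (by omega :
              (n+1)+(m+1) = n+m+1+1))).symm i)
          = ∑ s : Fin (n+1) ⊕ Fin (m+1), Sum.elim l l' s • Sum.elim h h' s :=
            Equiv.sum_comp (finSumFinEquiv.trans (finCongr (by omega))).symm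
              (fun s => Sum.elim l l' s • Sum.elim h h' s)
        _ = _ := by rw [Fintype.sum_sum_type]; simp
  · -- d4
    rintro f hfle ⟨n, l, h, hl, hh, hfeq⟩
    have hA21e : ∀ i, h i ∈ A21 D1 F2 → ∃ f1 B2, f1 ∈ D1 ∧
        (B2 ∈ F2 ∨ B2 = Set.univ) ∧ h i = fun p => f1 p.1 * ind B2 p.2 := by
      intro i hi
      obtain ⟨f1, hf1, B2, hB2, hEq⟩ := hi
      refine ⟨f1, B2, hf1, ?_, hEq⟩
      exact (Or.symm (by simpa [Set.mem_union, Set.mem_singleton_iff] using hB2))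
    have hA12e : ∀ i, h i ∈ A12 D2 F1 → ∃ f2 B1, f2 ∈ D2 ∧
        (B1 ∈ F1 ∨ B1 = Set.univ) ∧ h i = fun p => f2 p.2 * ind B1 p.1 := by
      intro i hi
      obtain ⟨f2, hf2, B1, hB1, hEq⟩ := hi
      refine ⟨f2, B1, hf2, ?_, hEq⟩
      exact (Or.symm (by simpa [Set.mem_union, Set.mem_singleton_iff] using hB1))
    set f1 : Fin (n+1) → X1 → ℝ := fun i =>
      if hi : h i ∈ A21 D1 F2 then (hA21e i hi).choose else 0 with hf1def
    set B2 : Fin (n+1) → Set X2 := fun i =>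
      if hi : h i ∈ A21 D1 F2 then (hA21e i hi).choose_spec.choose else Set.univ
      with hB2def
    have hJspec : ∀ i, h i ∈ A21 D1 F2 → f1 i ∈ D1 ∧
        ((B2 i ∈ F2 ∨ B2 i = Set.univ)) ∧
        h i = fun p => f1 i p.1 * ind (B2 i) p.2 := by
      intro i hi
      have h1 := (hA21e i hi).choose_spec.choose_spec
      simp only [hf1def, hB2def, dif_pos hi]
      exact h1
    set f2 : Fin (n+1) → X2 → ℝ := fun i =>
      if hi : h i ∈ A12 D2 F1 then (hA12e i hi).choose else 0 with hf2def
    set B1 : Fin (n+1) → Set X1 := fun i =>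
      if hi : h i ∈ A12 D2 F1 then (hA12e i hi).choose_spec.choose else Set.univ
      with hB1def
    have hTspec : ∀ i, h i ∈ A12 D2 F1 → f2 i ∈ D2 ∧
        ((B1 i ∈ F1 ∨ B1 i = Set.univ)) ∧
        h i = fun p => f2 i p.2 * ind (B1 i) p.1 := by
      intro i hi
      have h1 := (hA12e i hi).choose_spec.choose_spec
      simp only [hf2def, hB1def, dif_pos hi]
      exact h1
    set J : Finset (Fin (n+1)) := Finset.univ.filter (fun i => h i ∈ A21 D1 F2)
      with hJdef
    set Jc : Finset (Fin (n+1)) := Finset.univ.filter (fun i => ¬ (h i ∈ A21 D1 F2))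
      with hJcdef
    set T : Finset (Fin (n+1)) := Jc.filter (fun i => h i ∈ A12 D2 F1) with hTdef
    set G : Finset (Fin (n+1)) := Jc.filter (fun i => ¬ (h i ∈ A12 D2 F1)) with hGdef
    have hmemJ : ∀ i ∈ J, h i ∈ A21 D1 F2 := fun i hi => (Finset.mem_filter.mp hi).2
    have hmemT : ∀ i ∈ T, h i ∈ A12 D2 F1 := fun i hi => (Finset.mem_filter.mp hi).2
    have hmemG : ∀ i ∈ G, h i ∈ Gpos (X1 × X2) := by
      intro i hi
      have h1 := Finset.mem_filter.mp hi
      have h2 := Finset.mem_filter.mp h1.1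
      rcases hh i with (h3 | h3) | h3
      · exact absurd h3 h1.2
      · exact absurd h3 h2.2
      · exact h3
    have hGnonneg : ∀ i ∈ G, ∀ z, 0 ≤ h i z := fun i hi z => (hmemG i hi).2.1 z
    have hfz : ∀ z : X1 × X2, f z = ∑ i : Fin (n+1), l i * h i z := by
      intro z
      rw [hfeq]
      simp [Finset.sum_apply]
    have hsplit : ∀ z : X1 × X2, f z =
        (∑ i ∈ J, l i * h i z) +
          ((∑ i ∈ T, l i * h i z) + (∑ i ∈ G, l i * h i z)) := by
      intro z
      rw [hfz z]
      rw [← Finset.sum_filter_add_sum_filter_not Finset.univ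
        (fun i => h i ∈ A21 D1 F2) (fun i => l i * h i z)]
      congr 1
      rw [← Finset.sum_filter_add_sum_filter_not Jc
        (fun i => h i ∈ A12 D2 F1) (fun i => l i * h i z)]
    have hJterm : ∀ i ∈ J, ∀ z : X1 × X2,
        l i * h i z = (l i * f1 i z.1) * ind (B2 i) z.2 := by
      intro i hi z
      rw [(hJspec i (hmemJ i hi)).2.2]
      ring
    have hTterm : ∀ i ∈ T, ∀ z : X1 × X2,
        l i * h i z = (l i * f2 i z.2) * ind (B1 i) z.1 := by
      intro i hi z
      rw [(hTspec i (hmemT i hi)).2.2]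
      ring
    have hB1ne : ∀ i ∈ T, (B1 i).Nonempty := by
      intro i hi
      rcases (hTspec i (hmemT i hi)).2.1 with h1 | h1
      · exact hF1 _ h1
      · rw [h1]; exact Set.univ_nonempty
    have hB2ne : ∀ i ∈ J, (B2 i).Nonempty := by
      intro i hi
      rcases (hJspec i (hmemJ i hi)).2.1 with h1 | h1
      · exact hF2 _ h1
      · rw [h1]; exact Set.univ_nonempty
    have hTsum : ∀ (x1 : X1) (x2 : X2), (∑ i ∈ T, l i * h i (x1, x2))
        = ∑ i ∈ T.filter (fun i => x1 ∈ B1 i), l i * f2 i x2 := by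
      intro x1 x2
      have hsub : T.filter (fun i => x1 ∈ B1 i) ⊆ T := Finset.filter_subset _ _
      rw [← Finset.sum_subset hsub (fun i hiT hiN => ?_)]
      · refine Finset.sum_congr rfl (fun i hi => ?_)
        have hxmem : x1 ∈ B1 i := (Finset.mem_filter.mp hi).2
        rw [hTterm i (Finset.mem_filter.mp hi).1 (x1, x2)]
        simp [ind_of_mem' hxmem]
      · have hxn : x1 ∉ B1 i := fun hx =>
          hiN (Finset.mem_filter.mpr ⟨hiT, hx⟩)
        rw [hTterm i hiT (x1, x2)]
        simp [ind_of_not_mem' hxn]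
    have hJsum : ∀ (x1 : X1) (x2 : X2), (∑ i ∈ J, l i * h i (x1, x2))
        = ∑ i ∈ J, (l i * f1 i x1) * ind (B2 i) x2 := by
      intro x1 x2
      exact Finset.sum_congr rfl (fun i hi => hJterm i hi (x1, x2))
    by_cases hJne : J.Nonempty
    · -- main case : there are A21 terms
      obtain ⟨j0, hj0⟩ := hJne
      set W : Set X2 := ⋃ i ∈ J, B2 i with hWdef
      have hB2W : ∀ i ∈ J, B2 i ⊆ W := by
        intro i hi
        exact Set.subset_biUnion_of_mem hi
      have hWne : W.Nonempty := by
        obtain ⟨x, hx⟩ := hB2ne j0 hj0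
        exact ⟨x, hB2W j0 hj0 hx⟩
      have hWcover : ∀ x2 ∈ W, ∃ i ∈ J, x2 ∈ B2 i := by
        intro x2 hx2
        rw [hWdef] at hx2
        simpa using hx2
      have hkey : ∃ i0 ∈ J, 0 < NW D2 W (ind (B2 i0)) := by
        by_contra hcon
        push_neg at hcon
        have hcard : 0 < (J.card : ℝ) := by
          exact_mod_cast Finset.card_pos.mpr ⟨j0, hj0⟩
        set ε : ℝ := 1 / (2 * (J.card : ℝ)) with hεdef
        have hε : 0 < ε := by
          rw [hεdef]
          exact div_pos one_pos (by linarith)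
        have hmemε : ∀ i ∈ J, (fun x => (ε - ind (B2 i) x) * ind W x) ∈ D2 := by
          intro i hi
          have h1 : NW D2 W (ind (B2 i)) < ε := lt_of_le_of_lt (hcon i hi) hε
          obtain ⟨μ, hμ, hμε⟩ := exists_lt_of_csInf_lt
            (NWset_nonempty hD2 hWne (isGamble_ind _)) h1
          refine hD2.mem_of_le hμ (fun x => ?_)
            (isGamble_NWel (isGamble_ind _) ε)
          have : μ - ind (B2 i) x ≤ ε - ind (B2 i) x := by linarith
          exact mul_le_mul_of_nonneg_right this (ind_nonneg' W x)
        have hu : (fun x2 => ∑ i ∈ J,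
            (1:ℝ) * ((ε - ind (B2 i) x2) * ind W x2)) ∈ D2 :=
          hD2.sum_mem' ⟨j0, hj0⟩ (fun _ _ => one_pos) hmemε
        refine hD2.d4 _ (fun x2 => ?_) hu
        show (∑ i ∈ J, (1:ℝ) * ((ε - ind (B2 i) x2) * ind W x2)) ≤ 0
        by_cases hx2 : x2 ∈ W
        · obtain ⟨i', hi', hxi'⟩ := hWcover x2 hx2
          have hsum1 : (1:ℝ) ≤ ∑ i ∈ J, ind (B2 i) x2 := by
            calc (1:ℝ) = ind (B2 i') x2 := (ind_of_mem' hxi').symm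
              _ ≤ ∑ i ∈ J, ind (B2 i) x2 :=
                Finset.single_le_sum (fun i _ => ind_nonneg' _ _) hi'
          have heq : (∑ i ∈ J, (1:ℝ) * ((ε - ind (B2 i) x2) * ind W x2))
              = (J.card : ℝ) * ε - ∑ i ∈ J, ind (B2 i) x2 := by
            simp only [one_mul, ind_of_mem' hx2, mul_one]
            rw [Finset.sum_sub_distrib, Finset.sum_const, nsmul_eq_mul]
          rw [heq]
          have hcε : (J.card : ℝ) * ε = 1/2 := by
            rw [hεdef]
            rw [mul_one_div, div_eq_iff (ne_of_gt (by linarith))]; ring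
            try ring
          rw [hcε]
          linarith
        · simp [ind_of_not_mem' hx2]
      obtain ⟨i0, hi0J, hi0pos⟩ := hkey
      obtain ⟨φ, hφle, hφB⟩ := exists_extension_phi hD2 hWne (hB2ne i0 hi0J)
      have hφnonneg : ∀ v : ↥(gambleSub X2),
          ((fun x => (v : X2 → ℝ) x * ind W x) ∈ D2
            ∨ ∀ x, 0 ≤ (v : X2 → ℝ) x * ind W x) → 0 ≤ φ v :=
        fun v hv => phi_nonneg hD2 hWne hφle v hv
      set t : Fin (n+1) → ℝ := fun i => φ ⟨ind (B2 i), isGamble_ind (B2 i)⟩ with htdef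
      have ht0 : ∀ i ∈ J, 0 ≤ t i := by
        intro i hi
        refine hφnonneg _ (Or.inr (fun x => ?_))
        exact mul_nonneg (ind_nonneg' _ _) (ind_nonneg' _ _)
      have hti0 : 0 < t i0 := by
        have h3 : t i0 = φ ⟨ind (B2 i0), isGamble_ind (B2 i0)⟩ := rfl
        rw [h3, hφB]
        exact hi0pos
      -- gambles for slices
      have hslicegam : ∀ x1 : X1, IsGamble (fun x2 => f (x1, x2)) := by
        obtain ⟨M, hM⟩ := indNatExt_isGamble hD1 hD2
          (⟨n, l, h, hl, hh, hfeq⟩ : f ∈ indNatExt D1 D2 F1 F2)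
        exact fun x1 => ⟨M, fun x2 => hM (x1, x2)⟩
      have hhslicegam : ∀ (i : Fin (n+1)) (x1 : X1),
          IsGamble (fun x2 => h i (x1, x2)) := by
        intro i x1
        obtain ⟨M, hM⟩ := memA_isGamble hD1 hD2 (hh i)
        exact ⟨M, fun x2 => hM (x1, x2)⟩
      have hf2gam : ∀ i, IsGamble (f2 i) := by
        intro i
        by_cases hi : h i ∈ A12 D2 F1
        · exact hD2.subset_gambles _ (hTspec i hi).1
        · rw [hf2def]
          simp only [dif_neg hi]
          exact isGamble_zero
      -- E-valued decomposition of slices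
      have hcoesum : ∀ (S : Finset (Fin (n+1))) (g : Fin (n+1) → ↥(gambleSub X2))
          (x2 : X2), ((∑ i ∈ S, g i : ↥(gambleSub X2)) : X2 → ℝ) x2
            = ∑ i ∈ S, (g i : X2 → ℝ) x2 := by
        intro S g x2
        rw [Submodule.coe_sum]
        simp [Finset.sum_apply]
      have hEdecomp : ∀ x1 : X1,
          (⟨fun x2 => f (x1, x2), hslicegam x1⟩ : ↥(gambleSub X2))
          = (∑ i ∈ T.filter (fun i => x1 ∈ B1 i),
              l i • (⟨f2 i, hf2gam i⟩ : ↥(gambleSub X2)))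
            + (∑ i ∈ G, l i • (⟨fun x2 => h i (x1, x2), hhslicegam i x1⟩ :
                ↥(gambleSub X2)))
            + (∑ i ∈ J, (l i * f1 i x1) • (⟨ind (B2 i), isGamble_ind (B2 i)⟩ :
                ↥(gambleSub X2))) := by
        intro x1
        apply Subtype.ext
        funext x2
        show f (x1, x2) = _
        have hrhs : (((∑ i ∈ T.filter (fun i => x1 ∈ B1 i),
              l i • (⟨f2 i, hf2gam i⟩ : ↥(gambleSub X2)))
            + (∑ i ∈ G, l i • (⟨fun x2 => h i (x1, x2), hhslicegam i x1⟩ :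
                ↥(gambleSub X2)))
            + (∑ i ∈ J, (l i * f1 i x1) • (⟨ind (B2 i), isGamble_ind (B2 i)⟩ :
                ↥(gambleSub X2))) : ↥(gambleSub X2)) : X2 → ℝ) x2
            = (∑ i ∈ T.filter (fun i => x1 ∈ B1 i), l i * f2 i x2)
              + (∑ i ∈ G, l i * h i (x1, x2))
              + (∑ i ∈ J, (l i * f1 i x1) * ind (B2 i) x2) := by
          have e1 : (((∑ i ∈ T.filter (fun i => x1 ∈ B1 i),
              l i • (⟨f2 i, hf2gam i⟩ : ↥(gambleSub X2))
              : ↥(gambleSub X2))) : X2 → ℝ) x2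
              = ∑ i ∈ T.filter (fun i => x1 ∈ B1 i), l i * f2 i x2 := by
            rw [hcoesum]
            rfl
          have e2 : (((∑ i ∈ G, l i • (⟨fun x2 => h i (x1, x2),
              hhslicegam i x1⟩ : ↥(gambleSub X2)) : ↥(gambleSub X2))) : X2 → ℝ) x2
              = ∑ i ∈ G, l i * h i (x1, x2) := by
            rw [hcoesum]
            rfl
          have e3 : (((∑ i ∈ J, (l i * f1 i x1) • (⟨ind (B2 i),
              isGamble_ind (B2 i)⟩ : ↥(gambleSub X2)) : ↥(gambleSub X2))) : X2 → ℝ) x2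
              = ∑ i ∈ J, (l i * f1 i x1) * ind (B2 i) x2 := by
            rw [hcoesum]
            rfl
          rw [← e1, ← e2, ← e3]
          rfl
        rw [hrhs]
        rw [hsplit (x1, x2), hTsum x1 x2, hJsum x1 x2]
        ring
      -- the three sign facts
      have hωle : ∀ x1 : X1,
          φ (⟨fun x2 => f (x1, x2), hslicegam x1⟩ : ↥(gambleSub X2)) ≤ 0 := by
        intro x1
        have h1 := hφle (⟨fun x2 => f (x1, x2), hslicegam x1⟩ : ↥(gambleSub X2))
        have h2 : NW D2 W (fun x2 => f (x1, x2)) ≤ 0 :=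
          NW_nonpos hD2 hWne (hslicegam x1) (fun x2 _ => hfle (x1, x2))
        exact le_trans h1 h2
      have hdge : ∀ x1 : X1, 0 ≤ φ (∑ i ∈ T.filter (fun i => x1 ∈ B1 i),
          l i • (⟨f2 i, hf2gam i⟩ : ↥(gambleSub X2))) := by
        intro x1
        by_cases hTfne : (T.filter (fun i => x1 ∈ B1 i)).Nonempty
        · refine hφnonneg _ (Or.inl ?_)
          have hd2 : (fun x2 => ∑ i ∈ T.filter (fun i => x1 ∈ B1 i),
              l i * f2 i x2) ∈ D2 :=
            hD2.sum_mem' hTfne (fun i _ => hl i)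
              (fun i hi => (hTspec i (hmemT i (Finset.mem_filter.mp hi).1)).1)
          have hcoe : ((∑ i ∈ T.filter (fun i => x1 ∈ B1 i),
              l i • (⟨f2 i, hf2gam i⟩ : ↥(gambleSub X2)) : ↥(gambleSub X2))
                : X2 → ℝ)
              = fun x2 => ∑ i ∈ T.filter (fun i => x1 ∈ B1 i), l i * f2 i x2 := by
            funext x2
            rw [hcoesum]
            rfl
          rw [hcoe]
          have hoffW : ∀ x2, x2 ∉ W →
              (∑ i ∈ T.filter (fun i => x1 ∈ B1 i), l i * f2 i x2) ≤ 0 := by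
            intro x2 hx2
            have h1 := hsplit (x1, x2)
            have hjz : (∑ i ∈ J, l i * h i (x1, x2)) = 0 := by
              rw [hJsum x1 x2]
              refine Finset.sum_eq_zero (fun i hi => ?_)
              have hnm : x2 ∉ B2 i := fun hmm => hx2 (hB2W i hi hmm)
              rw [ind_of_not_mem' hnm, mul_zero]
            have hgz : 0 ≤ ∑ i ∈ G, l i * h i (x1, x2) :=
              Finset.sum_nonneg (fun i hi =>
                mul_nonneg (hl i).le (hGnonneg i hi _))
            have h5 : f (x1, x2) ≤ 0 := hfle (x1, x2)
            have h6 := hTsum x1 x2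
            linarith
          refine hD2.mem_of_le hd2 (fun x2 => ?_) ?_
          · by_cases hx2 : x2 ∈ W
            · rw [ind_of_mem' hx2, mul_one]
            · rw [ind_of_not_mem' hx2, mul_zero]
              exact hoffW x2 hx2
          · exact (isGamble_finsum _ _ (fun i _ => (hf2gam i).smul' (l i))).mul'
              (isGamble_ind W)
        · have hz : (∑ i ∈ T.filter (fun i => x1 ∈ B1 i),
              l i • (⟨f2 i, hf2gam i⟩ : ↥(gambleSub X2))) = 0 := by
            rw [Finset.not_nonempty_iff_eq_empty.mp hTfne, Finset.sum_empty]
          rw [hz, map_zero]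
      have hpge : ∀ x1 : X1, 0 ≤ φ (∑ i ∈ G,
          l i • (⟨fun x2 => h i (x1, x2), hhslicegam i x1⟩ : ↥(gambleSub X2))) := by
        intro x1
        rw [map_sum]
        refine Finset.sum_nonneg (fun i hi => ?_)
        rw [map_smul, smul_eq_mul]
        refine mul_nonneg (hl i).le (hφnonneg _ (Or.inr (fun x2 => ?_)))
        exact mul_nonneg (hGnonneg i hi (x1, x2)) (ind_nonneg' W x2)
      have hjφ : ∀ x1 : X1, φ (∑ i ∈ J, (l i * f1 i x1) •
          (⟨ind (B2 i), isGamble_ind (B2 i)⟩ : ↥(gambleSub X2)))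
          = ∑ i ∈ J, (l i * f1 i x1) * t i := by
        intro x1
        rw [map_sum]
        refine Finset.sum_congr rfl (fun i _ => ?_)
        rw [map_smul, smul_eq_mul]
      -- conclusion : an element of D1 which is nonpositive
      have hVle : ∀ x1 : X1, (∑ i ∈ J, (l i * t i) * f1 i x1) ≤ 0 := by
        intro x1
        have h1 := hωle x1
        rw [hEdecomp x1, map_add, map_add, hjφ x1] at h1
        have h4 : (∑ i ∈ J, (l i * f1 i x1) * t i)
            = ∑ i ∈ J, (l i * t i) * f1 i x1 :=
          Finset.sum_congr rfl (fun i _ => by ring)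
        rw [h4] at h1
        linarith [hdge x1, hpge x1]
      have hi0Jp : i0 ∈ J.filter (fun i => 0 < t i) :=
        Finset.mem_filter.mpr ⟨hi0J, hti0⟩
      have hVmem : (fun x1 => ∑ i ∈ J.filter (fun i => 0 < t i),
          (l i * t i) * f1 i x1) ∈ D1 :=
        hD1.sum_mem' ⟨i0, hi0Jp⟩
          (fun i hi => mul_pos (hl i) (Finset.mem_filter.mp hi).2)
          (fun i hi => (hJspec i (hmemJ i (Finset.mem_filter.mp hi).1)).1)
      refine hD1.d4 _ (fun x1 => ?_) hVmem
      show (∑ i ∈ J.filter (fun i => 0 < t i), (l i * t i) * f1 i x1) ≤ 0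
      have hext : (∑ i ∈ J.filter (fun i => 0 < t i), (l i * t i) * f1 i x1)
          = ∑ i ∈ J, (l i * t i) * f1 i x1 := by
        refine Finset.sum_subset (Finset.filter_subset _ _) (fun i hiJ hiN => ?_)
        have hnpos : ¬ 0 < t i := fun hpos =>
          hiN (Finset.mem_filter.mpr ⟨hiJ, hpos⟩)
        have h0 : t i = 0 := le_antisymm (not_lt.mp hnpos) (ht0 i hiJ)
        rw [h0]
        ring
      rw [hext]
      exact hVle x1

    · -- case: no A21 terms
      have hJe : ∀ i, h i ∉ A21 D1 F2 := by
        intro i hi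
        exact hJne ⟨i, Finset.mem_filter.mpr ⟨Finset.mem_univ i, hi⟩⟩
      have hJempty : J = ∅ := Finset.not_nonempty_iff_eq_empty.mp hJne
      by_cases hTne : T.Nonempty
      · obtain ⟨i1, hi1⟩ := hTne
        obtain ⟨x1, hx1⟩ := hB1ne i1 hi1
        set Tf := T.filter (fun i => x1 ∈ B1 i) with hTfdef
        have hi1' : i1 ∈ Tf := Finset.mem_filter.mpr ⟨hi1, hx1⟩
        have hdd : (fun x2 => ∑ i ∈ Tf, l i * f2 i x2) ∈ D2 :=
          hD2.sum_mem' ⟨i1, hi1'⟩ (fun i _ => hl i)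
            (fun i hi => (hTspec i (hmemT i (Finset.mem_filter.mp hi).1)).1)
        refine hD2.d4 _ ?_ hdd
        intro x2
        show (∑ i ∈ Tf, l i * f2 i x2) ≤ 0
        have h1 := hsplit (x1, x2)
        rw [hJempty] at h1
        simp only [Finset.sum_empty, zero_add] at h1
        have h2 : (∑ i ∈ T, l i * h i (x1, x2)) = ∑ i ∈ Tf, l i * f2 i x2 :=
          hTsum x1 x2
        have h3 : 0 ≤ ∑ i ∈ G, l i * h i (x1, x2) :=
          Finset.sum_nonneg (fun i hi => mul_nonneg (hl i).le (hGnonneg i hi _))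
        have h5 : f (x1, x2) ≤ 0 := hfle (x1, x2)
        rw [h2] at h1
        linarith
      · -- everything is Gpos
        have hTempty : T = ∅ := Finset.not_nonempty_iff_eq_empty.mp hTne
        have hall : ∀ i : Fin (n+1), h i ∈ Gpos (X1 × X2) := by
          intro i
          have hiJc : i ∈ Jc := Finset.mem_filter.mpr ⟨Finset.mem_univ _, hJe i⟩
          rcases hh i with (h3 | h3) | h3
          · exfalso
            have hiT : i ∈ T := by
              rw [hTdef]
              exact Finset.mem_filter.mpr ⟨hiJc, h3⟩
            rw [hTempty] at hiT
            exact absurd hiT (Finset.notMem_empty i)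
          · exact absurd h3 (hJe i)
          · exact h3
        obtain ⟨z, hz⟩ := Gpos_exists_pos (hall 0)
        have h1 : l 0 * h 0 z ≤ f z := by
          rw [hfz z]
          exact Finset.single_le_sum
            (fun i _ => mul_nonneg (hl i).le ((hall i).2.1 z)) (Finset.mem_univ 0)
        have h2 : f z ≤ 0 := hfle z
        have h3 := mul_pos (hl 0) hz
        linarith



end IPaper
end
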